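/- Let P be an n-detector modelling a spatial array of M ≥ n click detectors with quantum efficiency η ∈ [0, 1] and no dark counts, so that in particular P(n, n) = (M! / (M − n)!) · η^n / M^n. Then the PNR quality over all photon-number distributions satisfies Q_n(P) ≤ η^n. -/

import Mathlib

/-- A photon-number distribution: nonnegative with total probability 1. -/
def PhotonDist (p : ℕ → ℝ) : Prop :=
  (∀ m, 0 ≤ p m) ∧ (∑' m, p m) = 1

/-- An `n`-detector: conditional output probabilities `P k m` (probability of
output `k` given `m` input photons), supported on outputs `0, …, n`. -/
def IsNDetector (n : ℕ) (P : ℕ → ℕ → ℝ) : Prop :=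
  (∀ k m, 0 ≤ P k m ∧ P k m ≤ 1) ∧
  (∀ k m, n < k → P k m = 0) ∧
  (∀ m, (∑ k ∈ Finset.range (n + 1), P k m) = 1)

/-- The desired-output probability of the `n`-detector `P` on the input
distribution `p`. -/
noncomputable def desired (n : ℕ) (P : ℕ → ℕ → ℝ) (p : ℕ → ℝ) : ℝ :=
  (∑ m ∈ Finset.range (n + 1), P m m * p m) +
    ∑' m, if n < m then P n m * p m else 0

/-- The PNR quality of the `n`-detector `P` over the set of ALL photon-number
distributions. -/
noncomputable def qualityAll (n : ℕ) (P : ℕ → ℕ → ℝ) : ℝ :=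
  sInf (desired n P '' {p | PhotonDist p})

/-- for an `n`-detector modelling a spatial array of `M ≥ n`
click detectors of quantum efficiency `η` and no dark counts, so that
`P(n, n) = (M!/(M-n)!) · η^n / M^n`, the PNR quality over all photon-number
distributions satisfies `Q_n(P) ≤ η^n`. -/
theorem spatial_array_quality_le_eta_pow
    (n M : ℕ) (hnM : n ≤ M) (η : ℝ) (hη0 : 0 ≤ η) (hη1 : η ≤ 1)
    (P : ℕ → ℕ → ℝ) (hP : IsNDetector n P)
    (hPnn : P n n = (M.descFactorial n : ℝ) * η ^ n / (M : ℝ) ^ n) :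
    qualityAll n P ≤ η ^ n := by
  set δ : ℕ → ℝ := fun m => if m = n then (1:ℝ) else 0 with hδdef
  have hδ : PhotonDist δ := by
    constructor
    · intro m; simp only [hδdef]; split <;> norm_num
    · show (∑' m, if m = n then (1:ℝ) else 0) = 1
      exact tsum_ite_eq n (fun _ => (1:ℝ))
  have hdes : desired n P δ = P n n := by
    unfold desired
    have h1 : (∑ m ∈ Finset.range (n + 1), P m m * δ m) = P n n := by
      rw [Finset.sum_eq_single n]
      · simp [hδdef]
      · intro b _ hb; simp [hδdef, hb]
      · intro h; exact absurd (Finset.self_mem_range_succ n) h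
    have h2 : (∑' m, if n < m then P n m * δ m else 0) = 0 := by
      have : ∀ m, (if n < m then P n m * δ m else 0) = 0 := by
        intro m
        split
        · rename_i h; have hm : m ≠ n := by omega
          simp [hδdef, hm]
        · rfl
      simp only [this, tsum_zero]
    rw [h1, h2, add_zero]
  have hPle : P n n ≤ η ^ n := by
    rw [hPnn]
    rcases eq_or_lt_of_le (pow_nonneg (Nat.cast_nonneg M) n : (0:ℝ) ≤ (M:ℝ)^n) with h | h
    · rw [← h]; simp [pow_nonneg hη0]
    · rw [div_le_iff₀ h]
      have hd : (M.descFactorial n : ℝ) ≤ (M:ℝ) ^ n := by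
        exact_mod_cast Nat.descFactorial_le_pow M n
      calc (M.descFactorial n : ℝ) * η ^ n ≤ (M:ℝ)^n * η ^ n :=
            mul_le_mul_of_nonneg_right hd (pow_nonneg hη0 n)
        _ = η ^ n * (M:ℝ)^n := mul_comm _ _
  have hmem : desired n P δ ∈ desired n P '' {p | PhotonDist p} := ⟨δ, hδ, rfl⟩
  have hbdd : BddBelow (desired n P '' {p | PhotonDist p}) := by
    refine ⟨0, ?_⟩
    rintro x ⟨p, hp, rfl⟩
    have h1 : 0 ≤ ∑ m ∈ Finset.range (n + 1), P m m * p m :=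
      Finset.sum_nonneg fun m _ => mul_nonneg (hP.1 m m).1 (hp.1 m)
    have h2 : 0 ≤ ∑' m, if n < m then P n m * p m else 0 := by
      apply tsum_nonneg; intro m; split
      · exact mul_nonneg (hP.1 n m).1 (hp.1 m)
      · exact le_rfl
    unfold desired
    linarith
  calc qualityAll n P ≤ desired n P δ := csInf_le hbdd hmem
    _ = P n n := hdes
    _ ≤ η ^ n := hPle
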